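/- The eccentricity vector ε(x,p) = -x/‖x‖ + (p × (x × p))/(m²k) is a first integral of the Kepler problem: along any solution of x' = p/m, p' = -mk x/‖x‖³ with x(t) ≠ 0, the curve t ↦ ε(x(t),p(t)) is constant. -/

import Mathlib

noncomputable def cross3 (a b : EuclideanSpace ℝ (Fin 3)) : EuclideanSpace ℝ (Fin 3) :=
  (WithLp.equiv 2 (Fin 3 → ℝ)).symm
    (crossProduct (WithLp.equiv 2 (Fin 3 → ℝ) a) (WithLp.equiv 2 (Fin 3 → ℝ) b))

open scoped RealInnerProductSpace

namespace KeplerAux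
open Matrix

abbrev E3 := EuclideanSpace ℝ (Fin 3)

noncomputable def crossL : E3 →ₗ[ℝ] E3 →ₗ[ℝ] E3 :=
  LinearMap.mk₂ ℝ cross3
    (by intros; simp [cross3, _root_.map_add, LinearMap.add_apply])
    (by intros; simp [cross3, _root_.map_smul, LinearMap.smul_apply])
    (by intros; simp [cross3, _root_.map_add])
    (by intros; simp [cross3, _root_.map_smul])

noncomputable def crossCLM : E3 →L[ℝ] E3 →L[ℝ] E3 :=
  LinearMap.toContinuousLinearMap
    ((LinearMap.toContinuousLinearMap : (E3 →ₗ[ℝ] E3) ≃ₗ[ℝ] (E3 →L[ℝ] E3)).toLinearMap.comp crossL)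

lemma crossCLM_apply (a b : E3) : crossCLM a b = cross3 a b := rfl

end KeplerAux

namespace KeplerAux
open Matrix

lemma cross3_smul_left (c : ℝ) (a b : E3) : cross3 (c • a) b = c • cross3 a b := by
  simp [← crossCLM_apply, _root_.map_smul]

lemma cross3_smul_right (c : ℝ) (a b : E3) : cross3 a (c • b) = c • cross3 a b := by
  simp [← crossCLM_apply, _root_.map_smul]

lemma cross3_add_right (a b c : E3) : cross3 a (b + c) = cross3 a b + cross3 a c := by
  simp [← crossCLM_apply, _root_.map_add]

lemma cross3_zero_right (a : E3) : cross3 a 0 = 0 := by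
  simp [← crossCLM_apply]

lemma cross3_self (a : E3) : cross3 a a = 0 := by
  simp [cross3, cross_self]

lemma cross3_neg_left (a b : E3) : cross3 (-a) b = -cross3 a b := by
  simp [← crossCLM_apply, _root_.map_neg]

lemma triple_fin3 (u v w : Fin 3 → ℝ) :
    crossProduct u (crossProduct v w) = (u ⬝ᵥ w) • v - (u ⬝ᵥ v) • w := by
  ext i
  fin_cases i <;>
    simp [crossProduct, dotProduct, Fin.sum_univ_three] <;> ring

lemma inner_eq_dot (u w : E3) :
    ⟪u, w⟫ = (WithLp.equiv 2 (Fin 3 → ℝ) u) ⬝ᵥ (WithLp.equiv 2 (Fin 3 → ℝ) w) := by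
  simp [PiLp.inner_apply, RCLike.inner_apply, dotProduct, mul_comm]

lemma cross3_triple (u v w : E3) :
    cross3 u (cross3 v w) = ⟪u, w⟫ • v - ⟪u, v⟫ • w := by
  unfold cross3
  rw [Equiv.apply_symm_apply, triple_fin3, inner_eq_dot, inner_eq_dot]
  simp

lemma hasDerivAt_cross3 {f g : ℝ → E3} {f' g' : E3} {t : ℝ}
    (hf : HasDerivAt f f' t) (hg : HasDerivAt g g' t) :
    HasDerivAt (fun t => cross3 (f t) (g t)) (cross3 f' (g t) + cross3 (f t) g') t := by
  have h := (crossCLM.hasFDerivAt.comp_hasDerivAt t hf).clm_apply hg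
  simpa [crossCLM_apply] using h

end KeplerAux

/-- The eccentricity vector `ε(x,p) = -x/‖x‖ + (p × (x × p))/(m²k)` is a first
integral of the Kepler problem: along any solution of `x' = p/m`,
`p' = -(mk/‖x‖³)·x` with `x(t) ≠ 0` on an open interval, the curve
`t ↦ ε(x(t),p(t))` is constant. -/
theorem kepler_eccentricity_vector_first_integral
    (m k a b : ℝ) (hm : 0 < m) (hk : 0 < k)
    (x p : ℝ → EuclideanSpace ℝ (Fin 3))
    (hx0 : ∀ t ∈ Set.Ioo a b, x t ≠ 0)
    (hx' : ∀ t ∈ Set.Ioo a b, HasDerivAt x ((1 / m) • p t) t)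
    (hp' : ∀ t ∈ Set.Ioo a b, HasDerivAt p (-(m * k / ‖x t‖ ^ 3) • x t) t) :
    ∀ s ∈ Set.Ioo a b, ∀ t ∈ Set.Ioo a b,
      -(‖x s‖⁻¹) • x s + (1 / (m ^ 2 * k)) • cross3 (p s) (cross3 (x s) (p s))
        = -(‖x t‖⁻¹) • x t + (1 / (m ^ 2 * k)) • cross3 (p t) (cross3 (x t) (p t)) := by
  set ε : ℝ → KeplerAux.E3 := fun u =>
    -(‖x u‖⁻¹) • x u + (1 / (m ^ 2 * k)) • cross3 (p u) (cross3 (x u) (p u)) with hε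
  have hderiv : ∀ u ∈ Set.Ioo a b, HasDerivAt ε 0 u := by
    intro u hu
    have hxu := hx' u hu
    have hpu := hp' u hu
    have hxne := hx0 u hu
    have hr : (0:ℝ) < ‖x u‖ := norm_pos_iff.mpr hxne
    have hinne : ⟪x u, x u⟫ ≠ 0 := by
      rw [real_inner_self_eq_norm_mul_norm]; positivity
    have hsq := ((hxu.inner ℝ hxu).sqrt hinne)
    have heq : (fun t => Real.sqrt ⟪x t, x t⟫) = fun t => ‖x t‖ := by
      funext t; rw [real_inner_self_eq_norm_mul_norm, Real.sqrt_mul_self (norm_nonneg _)]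
    have hsqrt : Real.sqrt ⟪x u, x u⟫ = ‖x u‖ := congrFun heq u
    rw [heq] at hsq
    have hinv := hsq.inv hr.ne'
    have h1 := (hinv.smul hxu).neg
    have hxp := KeplerAux.hasDerivAt_cross3 hxu hpu
    have h2 := ((KeplerAux.hasDerivAt_cross3 hpu hxp).const_smul (1 / (m ^ 2 * k)))
    have h := h1.add h2
    have hm0 : m ≠ 0 := hm.ne'
    have hk0 : k ≠ 0 := hk.ne'
    have hr0 : ‖x u‖ ≠ 0 := hr.ne'
    convert h using 1
    · rfl
    · rfl
    · rfl
    · funext v; simp only [hε, neg_smul]; rfl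
    simp only [KeplerAux.cross3_smul_left, KeplerAux.cross3_smul_right,
      KeplerAux.cross3_add_right, KeplerAux.cross3_self, KeplerAux.cross3_zero_right, smul_zero, zero_add, add_zero,
      KeplerAux.cross3_triple, real_inner_smul_left, real_inner_smul_right,
      real_inner_self_eq_norm_mul_norm, hsqrt, real_inner_comm (p u) (x u),
      Real.sqrt_mul_self (norm_nonneg _), Pi.inv_apply]
    match_scalars <;> field_simp <;> ring
  intro s hs t ht
  have key : ∀ s t : ℝ, s ∈ Set.Ioo a b → t ∈ Set.Ioo a b → s ≤ t → ε t = ε s := by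
    intro s t hs ht hst
    have hsub : Set.Icc s t ⊆ Set.Ioo a b := fun u hu =>
      ⟨lt_of_lt_of_le hs.1 hu.1, lt_of_le_of_lt hu.2 ht.2⟩
    exact constant_of_has_deriv_right_zero
      (fun u hu => (hderiv u (hsub hu)).continuousAt.continuousWithinAt)
      (fun u hu => (hderiv u (hsub ⟨hu.1, le_of_lt hu.2⟩)).hasDerivWithinAt)
      t ⟨hst, le_rfl⟩
  rcases le_total s t with h1 | h1
  · exact (key s t hs ht h1).symm
  · exact key t s ht hs h1
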